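/- Let X be a real random variable with E[X²] < ∞, independent of a standard Gaussian Z, and let β > 0 be fixed. Then the function σ ↦ P(|X/σ + Z| ≥ β) is differentiable on (0, ∞) and its derivative equals E_X[(X/σ²)·(φ(X/σ + β) − φ(X/σ − β))]. -/

import Mathlib

open MeasureTheory

/-- Standard Gaussian density `φ(z) = e^{-z²/2}/√(2π)`. -/
noncomputable def gaussPDF (z : ℝ) : ℝ := Real.exp (-z ^ 2 / 2) / Real.sqrt (2 * Real.pi)

/-- Soft-thresholding function `η(x; τ) = sign(x)·max(|x| − τ, 0)`. -/
noncomputable def softThr (x τ : ℝ) : ℝ := Real.sign x * max (|x| - τ) 0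

/-- Soft-thresholding risk `r(τ; G) = E_{μ∼G, Z∼N(0,1)}[(η(μ + Z; τ) − μ)²]`. -/
noncomputable def stRisk (G : Measure ℝ) (τ : ℝ) : ℝ :=
  ∫ m, (∫ z, (softThr (m + z) τ - m) ^ 2 * gaussPDF z) ∂G

lemma gaussPDF_nonneg (z : ℝ) : 0 ≤ gaussPDF z :=
  div_nonneg (Real.exp_nonneg _) (Real.sqrt_nonneg _)

lemma gaussPDF_le_one (z : ℝ) : gaussPDF z ≤ 1 := by
  have h1 : Real.exp (-z ^ 2 / 2) ≤ 1 := Real.exp_le_one_iff.2 (by nlinarith [sq_nonneg z])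
  have h2 : (1:ℝ) ≤ Real.sqrt (2 * Real.pi) := by
    rw [show (1:ℝ) = Real.sqrt 1 by simp]
    exact Real.sqrt_le_sqrt (by nlinarith [Real.pi_gt_three])
  calc gaussPDF z ≤ 1 / 1 := by
        apply div_le_div₀ (by norm_num) h1 one_pos h2
    _ = 1 := by norm_num
  
lemma gaussPDF_neg (z : ℝ) : gaussPDF (-z) = gaussPDF z := by
  simp [gaussPDF, neg_pow]

lemma continuous_gaussPDF : Continuous gaussPDF := by
  unfold gaussPDF
  fun_prop

lemma integrable_gaussPDF : Integrable gaussPDF := by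
  have : Integrable (fun x : ℝ => Real.exp (-(1/2) * x ^ 2)) := integrable_exp_neg_mul_sq (by norm_num)
  have h := this.div_const (Real.sqrt (2 * Real.pi))
  have heq : gaussPDF = fun x => Real.exp (-(1/2) * x ^ 2) / Real.sqrt (2 * Real.pi) := by
    funext x; unfold gaussPDF; congr 1; ring
  rw [heq]; exact h

lemma integral_gaussPDF : ∫ z, gaussPDF z = 1 := by
  unfold gaussPDF
  rw [integral_div]
  have : ∫ z : ℝ, Real.exp (-z ^ 2 / 2) = Real.sqrt (2 * Real.pi) := by
    have := integral_gaussian (1/2)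
    simp only [show ∀ x : ℝ, -(1/2 : ℝ) * x ^ 2 = -x^2/2 by intro x; ring] at this
    rw [this, show Real.pi / (1/2) = 2 * Real.pi by ring]
  rw [this, div_self]
  positivity

noncomputable def Phi (t : ℝ) : ℝ := ∫ z in (0:ℝ)..t, gaussPDF z

lemma hasDerivAt_Phi (t : ℝ) : HasDerivAt Phi (gaussPDF t) t :=
  intervalIntegral.integral_hasDerivAt_right integrable_gaussPDF.intervalIntegrable
    (continuous_gaussPDF.stronglyMeasurableAtFilter _ _) continuous_gaussPDF.continuousAt

lemma continuous_Phi : Continuous Phi :=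
  continuous_iff_continuousAt.2 fun t => (hasDerivAt_Phi t).continuousAt

lemma Phi_sub (a b : ℝ) : Phi b - Phi a = ∫ z in a..b, gaussPDF z :=
  intervalIntegral.integral_interval_sub_left integrable_gaussPDF.intervalIntegrable
    integrable_gaussPDF.intervalIntegrable

lemma F_eq {β : ℝ} (hβ : 0 < β) (u : ℝ) :
    (∫ z in {z : ℝ | β ≤ |u + z|}, gaussPDF z) = 1 - (Phi (β - u) - Phi (-β - u)) := by
  have hS : MeasurableSet {z : ℝ | β ≤ |u + z|} :=
    measurableSet_le measurable_const (by fun_prop)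
  have hcompl : {z : ℝ | β ≤ |u + z|}ᶜ = Set.Ioo (-β - u) (β - u) := by
    ext z
    simp only [Set.mem_compl_iff, Set.mem_setOf_eq, not_le, Set.mem_Ioo, abs_lt]
    constructor <;> rintro ⟨h1, h2⟩ <;> constructor <;> linarith
  have key := integral_add_compl hS integrable_gaussPDF
  rw [hcompl] at key
  have h2 : Phi (β - u) - Phi (-β - u) = ∫ z in Set.Ioo (-β - u) (β - u), gaussPDF z := by
    rw [Phi_sub, intervalIntegral.integral_of_le (by linarith), integral_Ioc_eq_integral_Ioo]
  rw [h2, ← integral_gaussPDF, ← key]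
  ring

lemma Phi_diff_mem {β : ℝ} (hβ : 0 < β) (u : ℝ) :
    0 ≤ Phi (β - u) - Phi (-β - u) ∧ Phi (β - u) - Phi (-β - u) ≤ 1 := by
  rw [Phi_sub]
  constructor
  · apply intervalIntegral.integral_nonneg (by linarith)
    intro x _; exact gaussPDF_nonneg x
  · rw [intervalIntegral.integral_of_le (by linarith), ← integral_gaussPDF]
    exact setIntegral_le_integral integrable_gaussPDF
      (Filter.Eventually.of_forall gaussPDF_nonneg)


/-- for fixed `β > 0`, the function `σ ↦ P(|X/σ + Z| ≥ β)` is differentiable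
on `(0, ∞)` with derivative `E_X[(X/σ²)·(φ(X/σ + β) − φ(X/σ − β))]`. -/
theorem detection_prob_hasDerivAt_sigma (G : Measure ℝ) [IsProbabilityMeasure G]
    (hG : Integrable (fun x => x ^ 2) G) (β : ℝ) (hβ : 0 < β) :
    ∀ σ : ℝ, 0 < σ →
      HasDerivAt (fun s : ℝ => ∫ x, (∫ z in {z : ℝ | β ≤ |x / s + z|}, gaussPDF z) ∂G)
        (∫ x, (x / σ ^ 2) * (gaussPDF (x / σ + β) - gaussPDF (x / σ - β)) ∂G) σ := by
  intro σ hσ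
  simp only [F_eq hβ]
  set F : ℝ → ℝ → ℝ := fun s x => 1 - (Phi (β - x / s) - Phi (-β - x / s)) with hF
  set F' : ℝ → ℝ → ℝ := fun s x => (x / s ^ 2) * (gaussPDF (x / s + β) - gaussPDF (x / s - β)) with hF'
  have hball : ∀ s ∈ Metric.ball σ (σ / 2), σ / 2 < s := by
    intro s hs
    rw [Metric.mem_ball, Real.dist_eq, abs_lt] at hs
    linarith [hs.1]
  -- pointwise derivative
  have hderiv : ∀ (x s : ℝ), s ≠ 0 → HasDerivAt (fun s => F s x) (F' s x) s := by
    intro x s hs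
    have h1 : HasDerivAt (fun s : ℝ => x / s) (-(x / s ^ 2)) s := by
      simpa [div_eq_mul_inv, mul_comm, neg_mul, mul_neg] using (hasDerivAt_inv hs).const_mul x
    have h2 : HasDerivAt (fun s : ℝ => β - x / s) (x / s ^ 2) s := by
      simpa using (h1.const_sub β)
    have h3 : HasDerivAt (fun s : ℝ => -β - x / s) (x / s ^ 2) s := by
      simpa using (h1.const_sub (-β))
    have h4 := (hasDerivAt_Phi (β - x / s)).comp s h2
    have h5 := (hasDerivAt_Phi (-β - x / s)).comp s h3
    have h6 := ((h4.sub h5).const_sub 1)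
    refine HasDerivAt.congr_deriv h6 ?_
    have e1 : gaussPDF (β - x / s) = gaussPDF (x / s - β) := by
      rw [← gaussPDF_neg (x / s - β)]; ring_nf
    have e2 : gaussPDF (-β - x / s) = gaussPDF (x / s + β) := by
      rw [← gaussPDF_neg (x / s + β)]; ring_nf
    simp only [hF', Function.comp, e1, e2]
    ring
  have meas : ∀ s : ℝ, AEStronglyMeasurable (F s) G := by
    intro s
    have c : Continuous (F s) := by
      apply Continuous.sub continuous_const
      exact (continuous_Phi.comp (by fun_prop)).sub (continuous_Phi.comp (by fun_prop))
    exact c.aestronglyMeasurable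
  have hbound_int : Integrable (fun x : ℝ => 8 / σ ^ 2 * |x|) G := by
    apply Integrable.const_mul
    have h1 : Integrable (fun x : ℝ => 1 + x ^ 2) G := (integrable_const 1).add hG
    apply h1.mono continuous_abs.aestronglyMeasurable
    filter_upwards with x
    rw [Real.norm_eq_abs, abs_abs, Real.norm_eq_abs]
    have : |x| ≤ 1 + x ^ 2 := by nlinarith [abs_nonneg x, sq_abs x]
    calc |x| ≤ 1 + x ^ 2 := this
      _ ≤ |1 + x ^ 2| := le_abs_self _
  have main := hasDerivAt_integral_of_dominated_loc_of_deriv_le (μ := G)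
    (F := F) (F' := F') (x₀ := σ) (bound := fun x => 8 / σ ^ 2 * |x|)
    (Metric.ball_mem_nhds σ (half_pos hσ))
    (Filter.Eventually.of_forall meas)
    (by -- Integrable (F σ)
      apply (integrable_const (1:ℝ)).mono ((meas σ))
      filter_upwards with x
      rw [Real.norm_eq_abs, Real.norm_eq_abs, abs_one, abs_le]
      simp only [hF]
      have := Phi_diff_mem hβ (x / σ)
      constructor <;> [linarith [this.2]; linarith [this.1]])
    (by -- AEStronglyMeasurable (F' σ)
      apply Continuous.aestronglyMeasurable
      have := continuous_gaussPDF
      fun_prop)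
    (by -- bound
      filter_upwards with x
      intro s hs
      have hs2 := hball s hs
      have hspos : 0 < s := by linarith
      rw [Real.norm_eq_abs, hF']
      have hg : |gaussPDF (x / s + β) - gaussPDF (x / s - β)| ≤ 2 := by
        have := gaussPDF_nonneg (x / s + β)
        have := gaussPDF_le_one (x / s + β)
        have := gaussPDF_nonneg (x / s - β)
        have := gaussPDF_le_one (x / s - β)
        rw [abs_le]; constructor <;> linarith
      rw [abs_mul]
      have h1 : |x / s ^ 2| ≤ 4 / σ ^ 2 * |x| := by
        rw [abs_div, abs_of_nonneg (by positivity : (0:ℝ) ≤ s ^ 2)]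
        rw [div_le_iff₀ (by positivity)]
        have : σ ^ 2 / 4 ≤ s ^ 2 := by nlinarith
        calc |x| = |x| * 1 := by ring
          _ ≤ 4 / σ ^ 2 * |x| * s ^ 2 := by
              rw [show 4 / σ ^ 2 * |x| * s ^ 2 = |x| * (4 * s ^ 2 / σ ^ 2) by ring]
              apply mul_le_mul_of_nonneg_left _ (abs_nonneg x)
              rw [le_div_iff₀ (by positivity)]
              nlinarith
      calc |x / s ^ 2| * |gaussPDF (x / s + β) - gaussPDF (x / s - β)|
          ≤ (4 / σ ^ 2 * |x|) * 2 := by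
            apply mul_le_mul h1 hg (abs_nonneg _) (by positivity)
        _ = 8 / σ ^ 2 * |x| := by ring)
    hbound_int
    (by
      filter_upwards with x
      intro s hs
      exact hderiv x s (ne_of_gt (by have h2 := hball s hs; linarith : (0:ℝ) < s)))
  exact main.2
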